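/- For a sequence of nonnegative reals (J_q) with J_q ≤ A e^{-C√q} for constants A, C > 0, and Q_n chosen as Q_n = ⌊c₀ log n⌋ for suitable c₀ > 0 with Q_n ≤ log₃√n, the bound n^{-1/4}√(Σ_{q=0}^{Q_n} J_q² q 3^q) + √(Σ_{q>Q_n} J_q²) is at most C' exp(−c√(log n)) for constants C', c > 0. -/
import Mathlib

open Real

lemma my_sqrt_exp (x : ℝ) : Real.sqrt (Real.exp x) = Real.exp (x / 2) := by
  rw [show Real.exp x = Real.exp (x/2) ^ 2 by rw [← Real.exp_nat_mul]; ring_nf,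
    Real.sqrt_sq (Real.exp_nonneg _)]

lemma pow4_le_exp {x : ℝ} (hx : 0 ≤ x) : (x / 4) ^ 4 ≤ Real.exp x := by
  have h1 : x / 4 ≤ Real.exp (x / 4) := by
    have := Real.add_one_le_exp (x/4); linarith
  calc (x/4)^4 ≤ Real.exp (x/4) ^ 4 := by
        apply pow_le_pow_left₀ (by positivity) h1
    _ = Real.exp x := by rw [← Real.exp_nat_mul]; ring_nf

lemma summable_exp_neg_sqrt {C : ℝ} (hC : 0 < C) :
    Summable (fun k : ℕ => Real.exp (-C * Real.sqrt k)) := by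
  rw [← summable_nat_add_iff 1]
  have hsum : Summable (fun k : ℕ => (256 / C ^ 4) * (1 / ((k:ℝ)+1) ^ 2)) := by
    apply Summable.mul_left
    have := (summable_nat_add_iff (f := fun k : ℕ => 1 / (k:ℝ) ^ 2) 1).2
      (Real.summable_one_div_nat_pow.2 one_lt_two)
    simpa using this
  apply hsum.of_nonneg_of_le (fun k => (Real.exp_nonneg _))
  intro k
  set m : ℝ := Real.sqrt ((k:ℕ)+1 : ℕ) with hm
  have hs : 0 ≤ m := Real.sqrt_nonneg _
  have key : (C * m / 4) ^ 4 ≤ Real.exp (C * m) :=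
    pow4_le_exp (mul_nonneg hC.le hs)
  have hsq : m ^ 4 = ((k:ℝ)+1) ^ 2 := by
    rw [hm, show (4:ℕ) = 2*2 by norm_num, pow_mul, Real.sq_sqrt (by positivity)]
    push_cast; ring
  have hpow : (C * m / 4) ^ 4 = C^4 * ((k:ℝ)+1)^2 / 256 := by
    rw [div_pow, mul_pow, hsq]; norm_num
  rw [hpow] at key
  have hpos : (0:ℝ) < C^4 * ((k:ℝ)+1)^2 / 256 := by positivity
  calc Real.exp (-C * m) = (Real.exp (C * m))⁻¹ := by
        rw [← Real.exp_neg]; ring_nf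
    _ ≤ (C^4 * ((k:ℝ)+1)^2 / 256)⁻¹ := inv_anti₀ hpos key
    _ = 256 / C ^ 4 * (1 / ((k:ℝ)+1) ^ 2) := by field_simp

theorem subexponential_decay_rate (A C : ℝ) (hA : 0 < A) (hC : 0 < C) :
    ∃ c₀ : ℝ, 0 < c₀ ∧ ∃ C' c : ℝ, 0 < C' ∧ 0 < c ∧
      ∀ n : ℕ, 2 ≤ n →
        ((⌊c₀ * Real.log n⌋₊ : ℝ) ≤ Real.log n / (2 * Real.log 3)) ∧
        ∀ J : ℕ → ℝ, (∀ q : ℕ, 0 ≤ J q) →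
          (∀ q : ℕ, J q ≤ A * Real.exp (-C * Real.sqrt q)) →
          (n : ℝ) ^ (-(1 : ℝ) / 4) *
              Real.sqrt (∑ q ∈ Finset.range (⌊c₀ * Real.log n⌋₊ + 1),
                J q ^ 2 * q * 3 ^ q) +
            Real.sqrt (∑' k : ℕ, J (⌊c₀ * Real.log n⌋₊ + 1 + k) ^ 2) ≤
          C' * Real.exp (-c * Real.sqrt (Real.log n)) := by
  set S : ℝ := ∑' k : ℕ, Real.exp (-C * Real.sqrt k) with hS
  have hSsum := summable_exp_neg_sqrt hC
  have hS0 : 0 ≤ S := tsum_nonneg (fun k => Real.exp_nonneg _)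
  clear_value S
  refine ⟨1/16, by norm_num, A * (1 + Real.sqrt S), min (C/8) (1/16),
    by positivity, lt_min (by positivity) (by norm_num), ?_⟩
  intro n hn
  set L : ℝ := Real.log n with hLdef
  have hn0 : (0:ℝ) < n := by positivity
  have hL2 : Real.log 2 ≤ L := Real.log_le_log (by norm_num) (by exact_mod_cast hn)
  have hL4 : (1/4 : ℝ) < L := lt_of_lt_of_le (by linarith [Real.log_two_gt_d9]) hL2
  have hL0 : (0:ℝ) ≤ L := by linarith
  have hlog3 : Real.log 3 ≤ 2 := by
    have := Real.log_le_sub_one_of_pos (x := 3) (by norm_num); linarith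
  have hlog3pos : (0:ℝ) < Real.log 3 := Real.log_pos (by norm_num)
  set Q : ℕ := ⌊(1/16 : ℝ) * L⌋₊ with hQdef
  have hQle : (Q:ℝ) ≤ L/16 := by
    have := Nat.floor_le (a := (1/16:ℝ) * L) (by positivity)
    linarith
  have hQ1 : (1/16:ℝ) * L < (Q:ℝ) + 1 := by
    exact_mod_cast Nat.lt_floor_add_one ((1/16:ℝ) * L)
  clear_value Q
  clear hQdef
  constructor
  · refine hQle.trans ?_
    rw [div_le_div_iff₀ (by norm_num) (by positivity)]
    nlinarith
  intro J hJ0 hJle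
  set c : ℝ := min (C/8) (1/16) with hc
  have hc0 : 0 < c := lt_min (by positivity) (by norm_num)
  have hc16 : c ≤ 1/16 := min_le_right _ _
  have hcC : c ≤ C/8 := min_le_left _ _
  clear_value c
  clear hc
  have hsL : Real.sqrt L * Real.sqrt L = L := Real.mul_self_sqrt hL0
  have hsL2 : (1/2 : ℝ) ≤ Real.sqrt L := by
    rw [show (1/2:ℝ) = Real.sqrt (1/4) by
      rw [show (1/4:ℝ) = (1/2)^2 by norm_num, Real.sqrt_sq (by norm_num)]]
    exact Real.sqrt_le_sqrt hL4.le
  have hcL : c * Real.sqrt L ≤ L/8 := by nlinarith [Real.sqrt_nonneg L]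
  -- first term
  have hJA : ∀ q : ℕ, J q ≤ A := by
    intro q
    have h1 : Real.exp (-C * Real.sqrt q) ≤ 1 := by
      rw [Real.exp_le_one_iff]
      nlinarith [Real.sqrt_nonneg ((q:ℕ):ℝ)]
    nlinarith [hJle q]
  have hsum_le : ∑ q ∈ Finset.range (Q + 1), J q ^ 2 * q * 3 ^ q
      ≤ (A * ((Q:ℝ)+1))^2 * 3 ^ Q := by
    calc ∑ q ∈ Finset.range (Q + 1), J q ^ 2 * (q:ℝ) * 3 ^ q
        ≤ ∑ q ∈ Finset.range (Q + 1), A ^ 2 * ((Q:ℝ)+1) * 3 ^ Q := by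
          apply Finset.sum_le_sum
          intro q hq
          have hqQ : q ≤ Q := Nat.lt_succ_iff.mp (Finset.mem_range.mp hq)
          have h1 : J q ^ 2 ≤ A ^ 2 := by
            apply pow_le_pow_left₀ (hJ0 q) (hJA q)
          have h2 : (q:ℝ) ≤ (Q:ℝ)+1 := by exact_mod_cast Nat.le_succ_of_le hqQ
          have h3 : (3:ℝ) ^ q ≤ 3 ^ Q := pow_le_pow_right₀ (by norm_num) hqQ
          have hq0 : (0:ℝ) ≤ (q:ℝ) := Nat.cast_nonneg q
          have h30 : (0:ℝ) ≤ (3:ℝ)^q := by positivity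
          exact mul_le_mul (mul_le_mul h1 h2 hq0 (by positivity)) h3 h30 (by positivity)
      _ = ((Q:ℝ)+1) * (A ^ 2 * ((Q:ℝ)+1) * 3 ^ Q) := by
          rw [Finset.sum_const, Finset.card_range]; push_cast; ring
      _ = (A * ((Q:ℝ)+1))^2 * 3 ^ Q := by ring
  have hsqrt1 : Real.sqrt (∑ q ∈ Finset.range (Q + 1), J q ^ 2 * q * 3 ^ q)
      ≤ A * ((Q:ℝ)+1) * Real.sqrt ((3:ℝ) ^ Q) := by
    refine (Real.sqrt_le_sqrt hsum_le).trans_eq ?_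
    rw [Real.sqrt_mul (sq_nonneg _), Real.sqrt_sq (by positivity)]
  have hrpow : (n:ℝ) ^ (-(1:ℝ)/4) = Real.exp (-(L/4)) := by
    rw [Real.rpow_def_of_pos hn0, ← hLdef]; congr 1; ring
  clear_value L
  clear hLdef
  have hQ1exp : (Q:ℝ) + 1 ≤ Real.exp (L/16) := by
    have := Real.add_one_le_exp (L/16); linarith
  have h3Qexp : Real.sqrt ((3:ℝ) ^ Q) ≤ Real.exp (L/16) := by
    have h1 : (3:ℝ) ^ Q = Real.exp ((Q:ℝ) * Real.log 3) := by
      rw [Real.exp_nat_mul, Real.exp_log (by norm_num)]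
    rw [h1, my_sqrt_exp]
    apply Real.exp_le_exp.2
    nlinarith
  have hterm1 : (n:ℝ) ^ (-(1:ℝ)/4) *
      Real.sqrt (∑ q ∈ Finset.range (Q + 1), J q ^ 2 * q * 3 ^ q)
      ≤ A * Real.exp (-c * Real.sqrt L) := by
    rw [hrpow]
    calc Real.exp (-(L/4)) * Real.sqrt (∑ q ∈ Finset.range (Q + 1), J q ^ 2 * q * 3 ^ q)
        ≤ Real.exp (-(L/4)) * (A * ((Q:ℝ)+1) * Real.sqrt ((3:ℝ) ^ Q)) := by
          exact mul_le_mul_of_nonneg_left hsqrt1 (Real.exp_nonneg _)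
      _ ≤ Real.exp (-(L/4)) * (A * Real.exp (L/16) * Real.exp (L/16)) := by
          apply mul_le_mul_of_nonneg_left _ (Real.exp_nonneg _)
          exact mul_le_mul (mul_le_mul_of_nonneg_left hQ1exp hA.le) h3Qexp
            (Real.sqrt_nonneg _) (by positivity)
      _ = A * Real.exp (-(L/4) + L/16 + L/16) := by
          rw [Real.exp_add, Real.exp_add]; ring
      _ ≤ A * Real.exp (-c * Real.sqrt L) := by
          apply mul_le_mul_of_nonneg_left _ hA.le
          apply Real.exp_le_exp.2
          linarith [hcL]
  -- second term
  have e1 : Real.sqrt (1/16 : ℝ) = 1/4 := by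
    rw [show (1/16:ℝ) = (1/4)^2 by norm_num]
    exact Real.sqrt_sq (by norm_num)
  have hsqQ : Real.sqrt L / 4 ≤ Real.sqrt ((Q:ℝ)+1) := by
    have h1 : Real.sqrt ((1/16:ℝ) * L) ≤ Real.sqrt ((Q:ℝ)+1) :=
      Real.sqrt_le_sqrt hQ1.le
    rw [Real.sqrt_mul (by norm_num : (0:ℝ) ≤ 1/16) L, e1] at h1
    linarith only [h1]
  have hbound : ∀ k : ℕ, J (Q + 1 + k) ^ 2
      ≤ A^2 * Real.exp (-C * Real.sqrt ((Q:ℝ)+1)) * Real.exp (-C * Real.sqrt k) := by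
    intro k
    have hm : Real.sqrt ((Q:ℝ)+1) + Real.sqrt (k:ℝ) ≤ 2 * Real.sqrt ((Q+1+k : ℕ):ℝ) := by
      have h1 : Real.sqrt ((Q:ℝ)+1) ≤ Real.sqrt ((Q+1+k : ℕ):ℝ) := by
        apply Real.sqrt_le_sqrt; push_cast; linarith [Nat.cast_nonneg (α := ℝ) k]
      have h2 : Real.sqrt (k:ℝ) ≤ Real.sqrt ((Q+1+k : ℕ):ℝ) := by
        apply Real.sqrt_le_sqrt; push_cast; linarith [Nat.cast_nonneg (α := ℝ) Q]
      linarith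
    have h1 : J (Q+1+k) ^ 2 ≤ (A * Real.exp (-C * Real.sqrt ((Q+1+k:ℕ):ℝ))) ^ 2 :=
      pow_le_pow_left₀ (hJ0 _) (hJle _) 2
    calc J (Q+1+k) ^ 2 ≤ (A * Real.exp (-C * Real.sqrt ((Q+1+k:ℕ):ℝ))) ^ 2 := h1
      _ = A^2 * Real.exp (-C * Real.sqrt ((Q+1+k:ℕ):ℝ)) * Real.exp (-C * Real.sqrt ((Q+1+k:ℕ):ℝ)) := by
          rw [mul_pow]; ring
      _ = A^2 * Real.exp (-C * Real.sqrt ((Q+1+k:ℕ):ℝ) + -C * Real.sqrt ((Q+1+k:ℕ):ℝ)) := by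
          rw [Real.exp_add]; ring
      _ ≤ A^2 * Real.exp (-C * Real.sqrt ((Q:ℝ)+1) + -C * Real.sqrt (k:ℝ)) := by
          apply mul_le_mul_of_nonneg_left _ (by positivity)
          apply Real.exp_le_exp.2
          nlinarith only [mul_le_mul_of_nonneg_left hm hC.le]
      _ = A^2 * Real.exp (-C * Real.sqrt ((Q:ℝ)+1)) * Real.exp (-C * Real.sqrt k) := by
          rw [Real.exp_add]; ring
  have hg_sum : Summable (fun k : ℕ =>
      A^2 * Real.exp (-C * Real.sqrt ((Q:ℝ)+1)) * Real.exp (-C * Real.sqrt k)) :=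
    hSsum.mul_left _
  have hJsum : Summable (fun k : ℕ => J (Q + 1 + k) ^ 2) :=
    hg_sum.of_nonneg_of_le (fun k => sq_nonneg _) hbound
  have htsum : (∑' k : ℕ, J (Q + 1 + k) ^ 2)
      ≤ A^2 * Real.exp (-C * Real.sqrt ((Q:ℝ)+1)) * S := by
    calc (∑' k : ℕ, J (Q + 1 + k) ^ 2)
        ≤ ∑' k : ℕ, A^2 * Real.exp (-C * Real.sqrt ((Q:ℝ)+1)) * Real.exp (-C * Real.sqrt k) :=
          Summable.tsum_le_tsum hbound hJsum hg_sum
      _ = A^2 * Real.exp (-C * Real.sqrt ((Q:ℝ)+1)) * S := by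
          rw [hS]; exact tsum_mul_left
  have hterm2 : Real.sqrt (∑' k : ℕ, J (Q + 1 + k) ^ 2)
      ≤ A * Real.sqrt S * Real.exp (-c * Real.sqrt L) := by
    calc Real.sqrt (∑' k : ℕ, J (Q + 1 + k) ^ 2)
        ≤ Real.sqrt (A^2 * Real.exp (-C * Real.sqrt ((Q:ℝ)+1)) * S) :=
          Real.sqrt_le_sqrt htsum
      _ = A * Real.exp (-C * Real.sqrt ((Q:ℝ)+1) / 2) * Real.sqrt S := by
          rw [Real.sqrt_mul (mul_nonneg (sq_nonneg A) (Real.exp_nonneg _)) S,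
            Real.sqrt_mul (sq_nonneg A) _, Real.sqrt_sq hA.le, my_sqrt_exp]
      _ ≤ A * Real.exp (-c * Real.sqrt L) * Real.sqrt S := by
          apply mul_le_mul_of_nonneg_right _ (Real.sqrt_nonneg S)
          apply mul_le_mul_of_nonneg_left _ hA.le
          apply Real.exp_le_exp.2
          have hsq0 : 0 ≤ Real.sqrt L := Real.sqrt_nonneg L
          linarith only [mul_le_mul_of_nonneg_right hcC hsq0,
            mul_le_mul_of_nonneg_left hsqQ hC.le]
      _ = A * Real.sqrt S * Real.exp (-c * Real.sqrt L) := by ring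
  calc (n:ℝ) ^ (-(1:ℝ)/4) *
        Real.sqrt (∑ q ∈ Finset.range (Q + 1), J q ^ 2 * q * 3 ^ q) +
        Real.sqrt (∑' k : ℕ, J (Q + 1 + k) ^ 2)
      ≤ A * Real.exp (-c * Real.sqrt L) + A * Real.sqrt S * Real.exp (-c * Real.sqrt L) :=
        add_le_add hterm1 hterm2
    _ = A * (1 + Real.sqrt S) * Real.exp (-c * Real.sqrt L) := by ring
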